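/- Let r > 2, c > 0, C₁ > 0, and β ∈ ℂ. There exists a constant C > 0, depending only on r, c, C₁, and |β|, with the following property. Let γ ∈ ℂ with 0 < |γ| ≤ 1, and let ν⁻, ν⁺ ∈ ℂ satisfy |ν⁻| ≤ C₁|γ|, |ν⁺| ≤ C₁|γ|, Re ν⁻ ≤ −c|γ|, and Re ν⁺ ≥ c|γ|. Define H : ℝ → ℂ by H(ξ) = (β ν⁻/γ) e^{ν⁻ ξ} for ξ ≥ 0 and H(ξ) = (β ν⁺/γ) e^{ν⁺ ξ} for ξ < 0. Then for every odd measurable g : ℝ → ℝ with |g(y)| ≤ M⟨y⟩^{−r} for all y ∈ ℝ, one has sup_{x ∈ ℝ} ⟨x⟩^r |∫_ℝ H(x−y) g(y) dy| ≤ C M |γ|^{1−r}. -/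

import Mathlib

open MeasureTheory Set Real

lemma aux_abs_one_sub_exp (z : ℂ) (hz : z.re ≤ 0) :
    ‖1 - Complex.exp z‖ ≤ ‖z‖ := by
  have key : ∀ u ∈ Icc (0:ℝ) 1, HasDerivWithinAt (fun u : ℝ => Complex.exp (u * z))
      (Complex.exp ((u:ℂ) * z) * ((1:ℂ) * z)) (Icc 0 1) u := by
    intro u _
    exact ((Complex.ofRealCLM.hasDerivAt.mul_const z).cexp).hasDerivWithinAt
  have bound : ∀ u ∈ Icc (0:ℝ) 1, ‖Complex.exp ((u:ℂ) * z) * ((1:ℂ) * z)‖ ≤ ‖z‖ := by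
    intro u hu
    rw [norm_mul, one_mul]
    have h1 : ‖Complex.exp ((u:ℂ) * z)‖ ≤ 1 := by
      rw [Complex.norm_exp]
      apply Real.exp_le_one_iff.2
      have : ((u:ℂ) * z).re = u * z.re := by simp [Complex.mul_re]
      rw [this]
      exact mul_nonpos_of_nonneg_of_nonpos hu.1 hz
    calc ‖Complex.exp ((u:ℂ) * z)‖ * ‖z‖ ≤ 1 * ‖z‖ := by
          apply mul_le_mul_of_nonneg_right h1 (norm_nonneg _)
      _ = ‖z‖ := one_mul _
  have := (convex_Icc (0:ℝ) 1).norm_image_sub_le_of_norm_hasDerivWithin_le key bound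
    (left_mem_Icc.2 zero_le_one) (right_mem_Icc.2 zero_le_one)
  simp only [Complex.ofReal_one, Complex.ofReal_zero, one_mul, zero_mul, Complex.exp_zero] at this
  calc ‖1 - Complex.exp z‖ = ‖Complex.exp z - 1‖ := by
        exact norm_sub_rev _ _
    _ ≤ ‖z‖ * ‖(1:ℝ) - 0‖ := this
    _ = ‖z‖ := by simp

lemma aux_exp_abs_integrable (b T : ℝ) (hb : 0 < b) :
    Integrable (fun y : ℝ => Real.exp (-(b * |y - T|))) := by
  have hIoi : IntegrableOn (fun y : ℝ => Real.exp (-(b * |y|))) (Ioi 0) := by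
    refine (exp_neg_integrableOn_Ioi 0 hb).congr_fun ?_ measurableSet_Ioi
    intro y hy
    simp only []
    rw [abs_of_pos (show (0:ℝ) < y from hy), neg_mul]
  have hIic : IntegrableOn (fun y : ℝ => Real.exp (-(b * |y|))) (Iic 0) := by
    rw [← Measure.map_neg_eq_self (volume : Measure ℝ)]
    have m : MeasurableEmbedding fun x : ℝ => -x := (Homeomorph.neg ℝ).measurableEmbedding
    rw [m.integrableOn_map_iff]
    simp_rw [Function.comp_def, abs_neg, neg_preimage, neg_Iic, neg_zero]
    exact Iff.mpr integrableOn_Ici_iff_integrableOn_Ioi hIoi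
  have h0 : Integrable (fun y : ℝ => Real.exp (-(b * |y|))) := by
    have := hIic.union hIoi
    rw [Iic_union_Ioi] at this
    exact integrableOn_univ.mp this
  exact h0.comp_sub_right T

lemma aux_exp_abs_integral (b T : ℝ) (hb : 0 < b) :
    (∫ y : ℝ, Real.exp (-(b * |y - T|))) = 2 / b := by
  rw [integral_sub_right_eq_self (μ := volume) (fun y : ℝ => Real.exp (-(b * |y|))) T]
  have h1 : (∫ y : ℝ, Real.exp (-(b * |y|))) = 2 * ∫ y in Ioi (0:ℝ), Real.exp (-(b * y)) :=
    integral_comp_abs (f := fun u => Real.exp (-(b * u)))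
  rw [h1, integral_comp_mul_left_Ioi (fun u => Real.exp (-u)) 0 hb]
  simp only [mul_zero, smul_eq_mul]
  rw [integral_exp_neg_Ioi, neg_zero, Real.exp_zero]
  ring

lemma aux_br_one_le (y : ℝ) : 1 ≤ Real.sqrt (1 + y ^ 2) := by
  have := Real.sqrt_le_sqrt (show (1:ℝ) ≤ 1 + y ^ 2 by nlinarith)
  simpa using this

lemma aux_br_pos (y : ℝ) : 0 < Real.sqrt (1 + y ^ 2) :=
  lt_of_lt_of_le one_pos (aux_br_one_le y)

lemma aux_abs_le_br (y : ℝ) : |y| ≤ Real.sqrt (1 + y ^ 2) := by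
  rw [← Real.sqrt_sq_eq_abs]
  exact Real.sqrt_le_sqrt (by nlinarith)

lemma aux_br_le_one_add_abs (y : ℝ) : Real.sqrt (1 + y ^ 2) ≤ 1 + |y| := by
  rw [show (1:ℝ) + |y| = Real.sqrt ((1 + |y|) ^ 2) by
    rw [Real.sqrt_sq (by positivity)]]
  apply Real.sqrt_le_sqrt
  have : y ^ 2 = |y| ^ 2 := (sq_abs y).symm
  nlinarith [abs_nonneg y]

lemma aux_half_one_add_abs_le_br (y : ℝ) : (1 + |y|) / 2 ≤ Real.sqrt (1 + y ^ 2) := by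
  have h1 := aux_br_one_le y
  have h2 := aux_abs_le_br y
  linarith

lemma aux_br_integrable (s : ℝ) (hs : 1 < s) :
    Integrable (fun y : ℝ => Real.sqrt (1 + y ^ 2) ^ (-s)) := by
  have h0 : Integrable (fun y : ℝ => (1 + ‖y‖) ^ (-s)) :=
    integrable_one_add_norm (by simpa using hs)
  refine (h0.const_mul ((2:ℝ) ^ s)).mono' ?_ (Filter.Eventually.of_forall fun y => ?_)
  · apply Continuous.aestronglyMeasurable
    apply Continuous.rpow_const
    · exact Real.continuous_sqrt.comp (by continuity)
    · intro y; exact Or.inl (ne_of_gt (aux_br_pos y))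
  · rw [Real.norm_eq_abs, abs_of_nonneg (Real.rpow_nonneg (Real.sqrt_nonneg _) _)]
    have key : Real.sqrt (1 + y ^ 2) ^ (-s) ≤ ((1 + |y|) / 2) ^ (-s) :=
      Real.rpow_le_rpow_of_nonpos (by positivity) (aux_half_one_add_abs_le_br y)
        (by linarith)
    refine key.trans (le_of_eq ?_)
    rw [Real.norm_eq_abs, div_eq_mul_inv, Real.mul_rpow (by positivity) (by positivity),
      Real.inv_rpow (by norm_num : (0:ℝ) ≤ 2), Real.rpow_neg (by norm_num : (0:ℝ) ≤ 2),
      inv_inv]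
    ring

lemma aux_w_le_inv_one_add_sq (r y : ℝ) (hr : 2 ≤ r) :
    Real.sqrt (1 + y ^ 2) ^ (-r) ≤ (1 + y ^ 2)⁻¹ := by
  have h1 : Real.sqrt (1 + y ^ 2) ^ (-r) ≤ Real.sqrt (1 + y ^ 2) ^ (-2 : ℝ) :=
    Real.rpow_le_rpow_of_exponent_le (aux_br_one_le y) (by linarith)
  refine h1.trans (le_of_eq ?_)
  rw [show (-2:ℝ) = -((2:ℕ):ℝ) by norm_num, Real.rpow_neg (Real.sqrt_nonneg _),
    Real.rpow_natCast, Real.sq_sqrt (by positivity)]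

lemma aux_pow_mul_exp_neg_le (u : ℝ) (hu : 0 ≤ u) (n : ℕ) :
    u ^ n * Real.exp (-u) ≤ (n.factorial : ℝ) := by
  have h1 : u ^ n / (n.factorial : ℝ) ≤ Real.exp u := by
    refine le_trans ?_ (Real.sum_le_exp_of_nonneg hu (n + 1))
    exact Finset.single_le_sum (f := fun i => u ^ i / (i.factorial : ℝ))
      (fun i _ => by positivity) (Finset.self_mem_range_succ n)
  have h2 : u ^ n ≤ Real.exp u * n.factorial := by
    rw [div_le_iff₀ (by positivity : (0:ℝ) < (n.factorial : ℝ))] at h1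
    exact h1
  rw [Real.exp_neg, mul_inv_le_iff₀ (Real.exp_pos u)]
  calc u ^ n ≤ Real.exp u * n.factorial := h2
    _ = (n.factorial : ℝ) * Real.exp u := mul_comm _ _

lemma aux_one_add_pow_exp (u : ℝ) (hu : 0 ≤ u) (n : ℕ) :
    (1 + u) ^ n * Real.exp (-u) ≤ 2 ^ n * (1 + (n.factorial : ℝ)) := by
  have hmax : (1 + u) ^ n ≤ 2 ^ n * max 1 u ^ n := by
    rw [← mul_pow]
    apply pow_le_pow_left₀ (by positivity)
    have h1 : (1:ℝ) ≤ max 1 u := le_max_left _ _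
    have h2 : u ≤ max 1 u := le_max_right _ _
    linarith
  have hmax2 : max 1 u ^ n ≤ 1 + u ^ n := by
    rcases le_total u 1 with h | h
    · rw [max_eq_left h, one_pow]
      have : 0 ≤ u ^ n := by positivity
      linarith
    · rw [max_eq_right h]
      linarith
  have hexp1 : Real.exp (-u) ≤ 1 := Real.exp_le_one_iff.2 (by linarith)
  have hexp0 : 0 < Real.exp (-u) := Real.exp_pos _
  have hfact := aux_pow_mul_exp_neg_le u hu n
  calc (1 + u) ^ n * Real.exp (-u) ≤ (2 ^ n * (1 + u ^ n)) * Real.exp (-u) := by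
        apply mul_le_mul_of_nonneg_right _ hexp0.le
        calc (1+u)^n ≤ 2 ^ n * max 1 u ^ n := hmax
          _ ≤ 2 ^ n * (1 + u ^ n) := by
              apply mul_le_mul_of_nonneg_left hmax2 (by positivity)
    _ = 2 ^ n * (Real.exp (-u) + u ^ n * Real.exp (-u)) := by ring
    _ ≤ 2 ^ n * (1 + (n.factorial : ℝ)) := by
        apply mul_le_mul_of_nonneg_left _ (by positivity)
        linarith

lemma aux_weight_exp (r : ℝ) (hr : 0 ≤ r) (a x : ℝ) (ha : 0 < a) :
    Real.sqrt (1 + x ^ 2) ^ r * Real.exp (-(a * (|x| / 2))) ≤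
      (1 + 2 / a) ^ r * (2 ^ ⌈r⌉₊ * (1 + (Nat.factorial ⌈r⌉₊ : ℝ))) := by
  set n := ⌈r⌉₊ with hn
  set t := |x| with ht
  have ht0 : 0 ≤ t := abs_nonneg x
  set u := a * t / 2 with hu
  have hu0 : 0 ≤ u := by positivity
  have h2a : 0 < 2 / a := by positivity
  have hstep1 : Real.sqrt (1 + x ^ 2) ≤ (1 + 2 / a) * (1 + u) := by
    have e1 : Real.sqrt (1 + x ^ 2) ≤ 1 + t := aux_br_le_one_add_abs x
    have e2 : 2 / a * u = t := by
      rw [hu]; field_simp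
    nlinarith [mul_nonneg h2a.le hu0]
  have hstep2 : Real.sqrt (1 + x ^ 2) ^ r ≤ (1 + 2 / a) ^ r * (1 + u) ^ r := by
    rw [← Real.mul_rpow (by positivity) (by positivity)]
    exact Real.rpow_le_rpow (Real.sqrt_nonneg _) hstep1 hr
  have hstep3 : (1 + u) ^ r ≤ (1 + u) ^ (n : ℕ) := by
    rw [← Real.rpow_natCast (1 + u) n]
    exact Real.rpow_le_rpow_of_exponent_le (by linarith) (Nat.le_ceil r)
  have hexp : Real.exp (-(a * (t / 2))) = Real.exp (-u) := by
    rw [hu]; ring_nf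
  calc Real.sqrt (1 + x ^ 2) ^ r * Real.exp (-(a * (t / 2)))
      ≤ ((1 + 2 / a) ^ r * (1 + u) ^ n) * Real.exp (-u) := by
        rw [hexp]
        apply mul_le_mul_of_nonneg_right _ (Real.exp_pos _).le
        exact hstep2.trans (mul_le_mul_of_nonneg_left hstep3 (by positivity))
    _ = (1 + 2 / a) ^ r * ((1 + u) ^ n * Real.exp (-u)) := by ring
    _ ≤ (1 + 2 / a) ^ r * (2 ^ n * (1 + (n.factorial : ℝ))) := by
        apply mul_le_mul_of_nonneg_left (aux_one_add_pow_exp u hu0 n) (by positivity)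

section helpers

lemma aux_half_rpow (A s : ℝ) (hA : 0 ≤ A) : (A / 2) ^ (-s) = 2 ^ s * A ^ (-s) := by
  rw [div_eq_mul_inv, Real.mul_rpow hA (by norm_num),
    Real.inv_rpow (by norm_num : (0:ℝ) ≤ 2), Real.rpow_neg (by norm_num : (0:ℝ) ≤ 2),
    inv_inv]
  ring

end helpers


set_option maxHeartbeats 2000000 in
/-- Lemma 3.4 (weighted `L^∞` estimate): blowup of order `|γ|^{1-r}` of the derivative of
the principal resolvent part when no localization is given up. Here `⟨x⟩ = (1+x²)^{1/2}`. -/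
theorem stmt_5 (r c C₁ : ℝ) (hr : 2 < r) (hc : 0 < c) (hC₁ : 0 < C₁) (β : ℂ) :
    ∃ C > (0:ℝ), ∀ (γ νm νp : ℂ), 0 < ‖γ‖ → ‖γ‖ ≤ 1 →
      ‖νm‖ ≤ C₁ * ‖γ‖ →
      ‖νp‖ ≤ C₁ * ‖γ‖ →
      νm.re ≤ -c * ‖γ‖ →
      c * ‖γ‖ ≤ νp.re →
      ∀ (M : ℝ) (g : ℝ → ℝ), 0 < M → Measurable g →
        (∀ y : ℝ, g (-y) = -g y) →
        (∀ y : ℝ, |g y| ≤ M * Real.sqrt (1 + y ^ 2) ^ (-r)) →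
        ∀ x : ℝ, Real.sqrt (1 + x ^ 2) ^ r *
            ‖∫ y : ℝ,
              (if 0 ≤ x - y then β * νm / γ * Complex.exp (νm * ((x - y : ℝ) : ℂ))
                else β * νp / γ * Complex.exp (νp * ((x - y : ℝ) : ℂ))) * (g y : ℂ)‖
          ≤ C * M * ‖γ‖ ^ (1 - r) := by
  classical
  set n : ℕ := ⌈r⌉₊ with hn
  set J : ℝ := ∫ y : ℝ, Real.sqrt (1 + y ^ 2) ^ (-(r - 1)) with hJdef
  have hJint : Integrable (fun y : ℝ => Real.sqrt (1 + y ^ 2) ^ (-(r - 1))) :=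
    aux_br_integrable (r - 1) (by linarith)
  have hJ0 : 0 ≤ J :=
    integral_nonneg fun y => Real.rpow_nonneg (Real.sqrt_nonneg _) _
  set Q : ℝ := (1 + 2 / c) ^ r * (2 ^ n * (1 + (n.factorial : ℝ))) with hQdef
  have hQ0 : 0 ≤ Q := by positivity
  set Babs : ℝ := ‖β‖ with hBdef
  have hB0 : 0 ≤ Babs := norm_nonneg β
  set C : ℝ := 1 + 2 * Babs * C₁ ^ 2 * J * Q + 4 * (2:ℝ) ^ r * Babs * C₁ / c with hCdef
  have hC0 : 0 < C := by
    have h1 : 0 ≤ 2 * Babs * C₁ ^ 2 * J * Q := by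
      have : (0:ℝ) ≤ 2 * Babs * C₁ ^ 2 := by positivity
      exact mul_nonneg (mul_nonneg this hJ0) hQ0
    have h2 : 0 ≤ 4 * (2:ℝ) ^ r * Babs * C₁ / c := by positivity
    rw [hCdef]; linarith
  refine ⟨C, hC0, ?_⟩
  intro γ νm νp hγ0 hγ1 hνm hνp hνmre hνpre M g hM hgmeas hgodd hgbd x
  set aγ : ℝ := ‖γ‖ with haγdef
  have ha : 0 < c * aγ := mul_pos hc hγ0
  set H : ℝ → ℂ := fun ξ =>
    if 0 ≤ ξ then β * νm / γ * Complex.exp (νm * (ξ:ℂ))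
    else β * νp / γ * Complex.exp (νp * (ξ:ℂ)) with hHdef
  -- pointwise bound on H
  have hH : ∀ ξ : ℝ, ‖H ξ‖ ≤ Babs * C₁ * Real.exp (-(c * aγ * |ξ|)) := by
    intro ξ
    by_cases hξ : 0 ≤ ξ
    · have : H ξ = β * νm / γ * Complex.exp (νm * (ξ:ℂ)) := if_pos hξ
      rw [this, norm_mul, norm_div, norm_mul, Complex.norm_exp]
      have hre : (νm * (ξ:ℂ)).re = νm.re * ξ := by simp [Complex.mul_re]
      rw [hre, abs_of_nonneg hξ]
      have e1 : ‖β‖ * ‖νm‖ / ‖γ‖ ≤ Babs * C₁ := by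
        rw [mul_div_assoc]
        apply mul_le_mul_of_nonneg_left _ hB0
        rw [div_le_iff₀ hγ0]
        exact hνm
      have e2 : Real.exp (νm.re * ξ) ≤ Real.exp (-(c * aγ * ξ)) := by
        apply Real.exp_le_exp.2
        have := mul_le_mul_of_nonneg_right hνmre hξ
        calc νm.re * ξ ≤ -c * aγ * ξ := this
          _ = -(c * aγ * ξ) := by ring
      exact mul_le_mul e1 e2 (Real.exp_pos _).le (by positivity)
    · have : H ξ = β * νp / γ * Complex.exp (νp * (ξ:ℂ)) := if_neg hξ
      rw [this, norm_mul, norm_div, norm_mul, Complex.norm_exp]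
      have hre : (νp * (ξ:ℂ)).re = νp.re * ξ := by simp [Complex.mul_re]
      rw [hre]
      push_neg at hξ
      rw [abs_of_neg hξ]
      have e1 : ‖β‖ * ‖νp‖ / ‖γ‖ ≤ Babs * C₁ := by
        rw [mul_div_assoc]
        apply mul_le_mul_of_nonneg_left _ hB0
        rw [div_le_iff₀ hγ0]
        exact hνp
      have e2 : Real.exp (νp.re * ξ) ≤ Real.exp (-(c * aγ * -ξ)) := by
        apply Real.exp_le_exp.2
        have := mul_le_mul_of_nonpos_right hνpre hξ.le
        calc νp.re * ξ ≤ c * aγ * ξ := this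
          _ = -(c * aγ * -ξ) := by ring
      exact mul_le_mul e1 e2 (Real.exp_pos _).le (by positivity)
  set t : ℝ := |x| with htdef
  have ht0 : 0 ≤ t := abs_nonneg x
  -- far bound
  have hfar : ∀ y : ℝ, 0 ≤ y →
      ‖H (x - y) - H (x + y)‖ ≤
        2 * (Babs * C₁) * Real.exp (-(c * aγ * |y - t|)) := by
    intro y hy
    have e1 : |y - t| ≤ |x - y| := by
      rw [abs_sub_comm y t, htdef]
      calc |(|x| - y)| = |(|x| - |y|)| := by rw [abs_of_nonneg hy]
        _ ≤ |x - y| := abs_abs_sub_abs_le_abs_sub x y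
    have e2 : |y - t| ≤ |x + y| := by
      rw [abs_sub_comm y t, htdef, show x + y = x - -y by ring]
      calc |(|x| - y)| = |(|x| - |(-y)|)| := by rw [abs_neg, abs_of_nonneg hy]
        _ ≤ |x - -y| := abs_abs_sub_abs_le_abs_sub x (-y)
    have b1 : ‖H (x - y)‖ ≤ Babs * C₁ * Real.exp (-(c * aγ * |y - t|)) := by
      refine (hH (x - y)).trans ?_
      apply mul_le_mul_of_nonneg_left _ (by positivity)
      apply Real.exp_le_exp.2
      simp only [neg_le_neg_iff]
      exact mul_le_mul_of_nonneg_left e1 ha.le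
    have b2 : ‖H (x + y)‖ ≤ Babs * C₁ * Real.exp (-(c * aγ * |y - t|)) := by
      refine (hH (x + y)).trans ?_
      apply mul_le_mul_of_nonneg_left _ (by positivity)
      apply Real.exp_le_exp.2
      simp only [neg_le_neg_iff]
      exact mul_le_mul_of_nonneg_left e2 ha.le
    calc ‖H (x - y) - H (x + y)‖
        ≤ ‖H (x - y)‖ + ‖H (x + y)‖ := by
          exact norm_sub_le (H (x - y)) (H (x + y))
      _ ≤ 2 * (Babs * C₁) * Real.exp (-(c * aγ * |y - t|)) := by linarith
  -- near bound
  have hnear : ∀ y : ℝ, 0 < y → y < t →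
      ‖H (x - y) - H (x + y)‖ ≤
        2 * Babs * C₁ * (C₁ * aγ) * y * Real.exp (-(c * aγ * (t - y))) := by
    intro y hy hyt
    have hx0 : x ≠ 0 := by
      intro h
      rw [htdef, h, abs_zero] at hyt
      linarith
    rcases hx0.lt_or_gt with hx | hx
    · -- x < 0 : both νp branch
      have htx : t = -x := by rw [htdef, abs_of_neg hx]
      have hxy1 : ¬ (0 ≤ x - y) := by push_neg; linarith
      have hxy2 : ¬ (0 ≤ x + y) := by push_neg; linarith [htx ▸ hyt]
      have hfac : H (x - y) - H (x + y) =
          β * νp / γ * Complex.exp (νp * ((x + y : ℝ):ℂ)) *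
            (Complex.exp (νp * ((-(2*y) : ℝ):ℂ)) - 1) := by
        have h1 : H (x - y) = β * νp / γ * Complex.exp (νp * ((x - y : ℝ):ℂ)) := if_neg hxy1
        have h2 : H (x + y) = β * νp / γ * Complex.exp (νp * ((x + y : ℝ):ℂ)) := if_neg hxy2
        have h3 : Complex.exp (νp * ((x - y : ℝ):ℂ)) =
            Complex.exp (νp * ((x + y : ℝ):ℂ)) * Complex.exp (νp * ((-(2*y) : ℝ):ℂ)) := by
          rw [← Complex.exp_add]
          congr 1
          push_cast
          ring
        rw [h1, h2, h3]
        ring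
      rw [hfac, norm_mul, norm_mul, norm_div, norm_mul, Complex.norm_exp]
      have hre : (νp * ((x + y : ℝ):ℂ)).re = νp.re * (x + y) := by simp [Complex.mul_re]
      rw [hre]
      have e1 : ‖β‖ * ‖νp‖ / ‖γ‖ ≤ Babs * C₁ := by
        rw [mul_div_assoc]
        apply mul_le_mul_of_nonneg_left _ hB0
        rw [div_le_iff₀ hγ0]
        exact hνp
      have e2 : Real.exp (νp.re * (x + y)) ≤ Real.exp (-(c * aγ * (t - y))) := by
        apply Real.exp_le_exp.2
        have hxy2' : x + y ≤ 0 := by push_neg at hxy2; linarith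
        have := mul_le_mul_of_nonpos_right hνpre hxy2'
        calc νp.re * (x + y) ≤ c * aγ * (x + y) := this
          _ = -(c * aγ * (t - y)) := by rw [htx]; ring
      have e3 : ‖Complex.exp (νp * ((-(2*y) : ℝ):ℂ)) - 1‖ ≤ C₁ * aγ * (2 * y) := by
        rw [norm_sub_rev]
        refine (aux_abs_one_sub_exp _ ?_).trans ?_
        · have : (νp * ((-(2*y) : ℝ):ℂ)).re = νp.re * (-(2*y)) := by simp [Complex.mul_re]
          rw [this]
          apply mul_nonpos_of_nonneg_of_nonpos (le_trans ha.le hνpre) (by linarith)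
        · rw [norm_mul, Complex.norm_real, Real.norm_eq_abs, abs_of_nonpos (by linarith : -(2*y) ≤ 0)]
          have : ‖νp‖ * (-(-(2*y))) = ‖νp‖ * (2*y) := by ring_nf
          rw [this]
          apply mul_le_mul hνp le_rfl (by linarith) (by positivity)
      calc ‖β‖ * ‖νp‖ / ‖γ‖ * Real.exp (νp.re * (x + y)) *
            ‖Complex.exp (νp * ((-(2*y) : ℝ):ℂ)) - 1‖
          ≤ (Babs * C₁) * Real.exp (-(c * aγ * (t - y))) * (C₁ * aγ * (2 * y)) := by
            apply mul_le_mul _ e3 (norm_nonneg _) (by positivity)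
            exact mul_le_mul e1 e2 (Real.exp_pos _).le (by positivity)
        _ = 2 * Babs * C₁ * (C₁ * aγ) * y * Real.exp (-(c * aγ * (t - y))) := by ring
    · -- 0 < x : both νm branch
      have htx : t = x := by rw [htdef, abs_of_pos hx]
      have hxy1 : 0 ≤ x - y := by rw [htx] at hyt; linarith
      have hxy2 : 0 ≤ x + y := by linarith
      have hfac : H (x - y) - H (x + y) =
          β * νm / γ * Complex.exp (νm * ((x - y : ℝ):ℂ)) *
            (1 - Complex.exp (νm * ((2*y : ℝ):ℂ))) := by
        have h1 : H (x - y) = β * νm / γ * Complex.exp (νm * ((x - y : ℝ):ℂ)) := if_pos hxy1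
        have h2 : H (x + y) = β * νm / γ * Complex.exp (νm * ((x + y : ℝ):ℂ)) := if_pos hxy2
        have h3 : Complex.exp (νm * ((x + y : ℝ):ℂ)) =
            Complex.exp (νm * ((x - y : ℝ):ℂ)) * Complex.exp (νm * ((2*y : ℝ):ℂ)) := by
          rw [← Complex.exp_add]
          congr 1
          push_cast
          ring
        rw [h1, h2, h3]
        ring
      rw [hfac, norm_mul, norm_mul, norm_div, norm_mul, Complex.norm_exp]
      have hre : (νm * ((x - y : ℝ):ℂ)).re = νm.re * (x - y) := by simp [Complex.mul_re]
      rw [hre]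
      have e1 : ‖β‖ * ‖νm‖ / ‖γ‖ ≤ Babs * C₁ := by
        rw [mul_div_assoc]
        apply mul_le_mul_of_nonneg_left _ hB0
        rw [div_le_iff₀ hγ0]
        exact hνm
      have e2 : Real.exp (νm.re * (x - y)) ≤ Real.exp (-(c * aγ * (t - y))) := by
        apply Real.exp_le_exp.2
        have := mul_le_mul_of_nonneg_right hνmre hxy1
        calc νm.re * (x - y) ≤ -c * aγ * (x - y) := this
          _ = -(c * aγ * (t - y)) := by rw [htx]; ring
      have e3 : ‖1 - Complex.exp (νm * ((2*y : ℝ):ℂ))‖ ≤ C₁ * aγ * (2 * y) := by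
        refine (aux_abs_one_sub_exp _ ?_).trans ?_
        · have : (νm * ((2*y : ℝ):ℂ)).re = νm.re * (2*y) := by simp [Complex.mul_re]
          rw [this]
          apply mul_nonpos_of_nonpos_of_nonneg _ (by linarith)
          calc νm.re ≤ -c * aγ := hνmre
            _ ≤ 0 := by nlinarith
        · rw [norm_mul, Complex.norm_real, Real.norm_eq_abs, abs_of_nonneg (by linarith : (0:ℝ) ≤ 2*y)]
          apply mul_le_mul hνm le_rfl (by linarith) (by positivity)
      calc ‖β‖ * ‖νm‖ / ‖γ‖ * Real.exp (νm.re * (x - y)) *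
            ‖1 - Complex.exp (νm * ((2*y : ℝ):ℂ))‖
          ≤ (Babs * C₁) * Real.exp (-(c * aγ * (t - y))) * (C₁ * aγ * (2 * y)) := by
            apply mul_le_mul _ e3 (norm_nonneg _) (by positivity)
            exact mul_le_mul e1 e2 (Real.exp_pos _).le (by positivity)
        _ = 2 * Babs * C₁ * (C₁ * aγ) * y * Real.exp (-(c * aγ * (t - y))) := by ring
  -- reduce goal to H-form
  have hIeq0 : (∫ y : ℝ,
      (if 0 ≤ x - y then β * νm / γ * Complex.exp (νm * ((x - y : ℝ) : ℂ))
        else β * νp / γ * Complex.exp (νp * ((x - y : ℝ) : ℂ))) * (g y : ℂ)) =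
      ∫ y : ℝ, H (x - y) * (g y : ℂ) := rfl
  rw [hIeq0]
  -- measurability and integrability
  have hHmeas : Measurable H := by
    rw [hHdef]
    apply Measurable.ite
    · exact measurableSet_Ici (a := (0:ℝ))
    · exact (continuous_const.mul (Complex.continuous_exp.comp
        (continuous_const.mul Complex.continuous_ofReal))).measurable
    · exact (continuous_const.mul (Complex.continuous_exp.comp
        (continuous_const.mul Complex.continuous_ofReal))).measurable
  have hgmeasC : Measurable fun y : ℝ => (g y : ℂ) := Complex.measurable_ofReal.comp hgmeas
  have hFmeas : AEStronglyMeasurable (fun y : ℝ => H (x - y) * (g y:ℂ)) volume :=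
    ((hHmeas.comp (measurable_const.sub measurable_id)).mul hgmeasC).aestronglyMeasurable
  have hF2meas : AEStronglyMeasurable (fun y : ℝ => H (x + y) * (g y:ℂ)) volume :=
    ((hHmeas.comp (measurable_const.add measurable_id)).mul hgmeasC).aestronglyMeasurable
  have hwle : ∀ y : ℝ, Real.sqrt (1 + y^2) ^ (-r) ≤ (1 + y^2)⁻¹ :=
    fun y => aux_w_le_inv_one_add_sq r y (by linarith)
  have hmaj : Integrable (fun y : ℝ => Babs * C₁ * M * (1 + y^2)⁻¹) :=
    integrable_inv_one_add_sq.const_mul _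
  have hnorm : ∀ (z : ℝ) (y : ℝ), ‖H z * (g y:ℂ)‖ ≤ Babs * C₁ * M * (1 + y^2)⁻¹ := by
    intro z y
    rw [norm_mul, Complex.norm_real, Real.norm_eq_abs]
    have hexp1 : Real.exp (-(c * aγ * |z|)) ≤ 1 := by
      apply Real.exp_le_one_iff.2
      have : 0 ≤ c * aγ * |z| := by positivity
      linarith
    have h1 : ‖H z‖ ≤ Babs * C₁ := by
      refine (hH z).trans ?_
      calc Babs * C₁ * Real.exp (-(c * aγ * |z|)) ≤ Babs * C₁ * 1 :=
          mul_le_mul_of_nonneg_left hexp1 (mul_nonneg hB0 hC₁.le)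
        _ = Babs * C₁ := mul_one _
    have h2 : |g y| ≤ M * (1 + y^2)⁻¹ :=
      (hgbd y).trans (mul_le_mul_of_nonneg_left (hwle y) hM.le)
    calc ‖H z‖ * |g y| ≤ (Babs * C₁) * (M * (1+y^2)⁻¹) :=
        mul_le_mul h1 h2 (abs_nonneg _) (mul_nonneg hB0 hC₁.le)
      _ = Babs * C₁ * M * (1+y^2)⁻¹ := by ring
  have hFint : Integrable (fun y : ℝ => H (x - y) * (g y:ℂ)) :=
    hmaj.mono' hFmeas (Filter.Eventually.of_forall fun y => by
      exact hnorm (x - y) y)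
  have hF2int : Integrable (fun y : ℝ => H (x + y) * (g y:ℂ)) :=
    hmaj.mono' hF2meas (Filter.Eventually.of_forall fun y => by
      exact hnorm (x + y) y)
  -- oddness rewriting
  have hIodd : (∫ y : ℝ, H (x - y) * (g y:ℂ)) =
      ∫ y in Ioi (0:ℝ), (H (x - y) - H (x + y)) * (g y:ℂ) := by
    have h2 : (∫ y in Iic (0:ℝ), H (x - y) * (g y:ℂ)) =
        ∫ y in Ioi (0:ℝ), H (x + y) * ((g (-y) : ℝ):ℂ) := by
      have hcn := integral_comp_neg_Iic (0:ℝ) (fun u : ℝ => H (x + u) * ((g (-u):ℝ):ℂ))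
      rw [neg_zero] at hcn
      rw [← hcn]
      apply setIntegral_congr_fun measurableSet_Iic
      intro y _
      simp only [neg_neg, sub_eq_add_neg]
    have h3 : (∫ y in Ioi (0:ℝ), H (x + y) * ((g (-y):ℝ):ℂ)) =
        ∫ y in Ioi (0:ℝ), -(H (x + y) * (g y:ℂ)) := by
      apply setIntegral_congr_fun measurableSet_Ioi
      intro y _
      show H (x + y) * ((g (-y) : ℝ):ℂ) = -(H (x + y) * ((g y : ℝ):ℂ))
      rw [hgodd y]
      push_cast
      ring
    calc (∫ y : ℝ, H (x - y) * (g y:ℂ))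
        = (∫ y in Iic (0:ℝ), H (x - y) * (g y:ℂ)) + ∫ y in Ioi (0:ℝ), H (x - y) * (g y:ℂ) :=
          (intervalIntegral.integral_Iic_add_Ioi hFint.integrableOn hFint.integrableOn).symm
      _ = -(∫ y in Ioi (0:ℝ), H (x + y) * (g y:ℂ)) + ∫ y in Ioi (0:ℝ), H (x - y) * (g y:ℂ) := by
          rw [h2, h3, integral_neg]
      _ = (∫ y in Ioi (0:ℝ), H (x - y) * (g y:ℂ)) - ∫ y in Ioi (0:ℝ), H (x + y) * (g y:ℂ) := by
          ring
      _ = ∫ y in Ioi (0:ℝ), (H (x - y) * (g y:ℂ) - H (x + y) * (g y:ℂ)) :=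
          (integral_sub hFint.integrableOn hF2int.integrableOn).symm
      _ = ∫ y in Ioi (0:ℝ), (H (x - y) - H (x + y)) * (g y:ℂ) := by
          apply setIntegral_congr_fun measurableSet_Ioi
          intro y _
          ring
  set φ : ℝ → ℝ := fun y => ‖(H (x - y) - H (x + y)) * (g y:ℂ)‖ with hφdef
  have hφint : Integrable φ := by
    have : φ = fun y => ‖H (x - y) * (g y:ℂ) - H (x + y) * (g y:ℂ)‖ := by
      funext y
      simp only [hφdef]
      congr 1
      ring
    rw [this]
    exact (hFint.sub hF2int).norm
  have habs : ‖∫ y in Ioi (0:ℝ), (H (x - y) - H (x + y)) * (g y:ℂ)‖ ≤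
      ∫ y in Ioi (0:ℝ), φ y := by
    refine (norm_integral_le_integral_norm _).trans (le_of_eq ?_)
    apply setIntegral_congr_fun measurableSet_Ioi
    intro y _
    simp only [hφdef]
  have hsplit : (∫ y in Ioi (0:ℝ), φ y) =
      (∫ y in Ioc (0:ℝ) (t/2), φ y) + ∫ y in Ioi (t/2), φ y := by
    rw [← Ioc_union_Ioi_eq_Ioi (by linarith : (0:ℝ) ≤ t/2),
      setIntegral_union (Ioc_disjoint_Ioi le_rfl) measurableSet_Ioi
        hφint.integrableOn hφint.integrableOn]
  -- piece 1
  have hbr1 : ∀ y : ℝ, 0 < y →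
      y * Real.sqrt (1 + y^2) ^ (-r) ≤ Real.sqrt (1 + y^2) ^ (-(r-1)) := by
    intro y hy
    have h1 : y ≤ Real.sqrt (1 + y^2) := (le_abs_self y).trans (aux_abs_le_br y)
    have h2 : Real.sqrt (1+y^2) * Real.sqrt (1+y^2) ^ (-r) =
        Real.sqrt (1+y^2) ^ (-(r-1)) := by
      nth_rewrite 1 [← Real.rpow_one (Real.sqrt (1+y^2))]
      rw [← Real.rpow_add (aux_br_pos y)]
      congr 1
      ring
    rw [← h2]
    exact mul_le_mul_of_nonneg_right h1 (Real.rpow_nonneg (Real.sqrt_nonneg _) _)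
  have hco1 : (0:ℝ) ≤ 2 * Babs * C₁ * (C₁ * aγ) * M :=
    mul_nonneg (mul_nonneg (mul_nonneg (mul_nonneg (by norm_num) hB0) hC₁.le)
      (mul_nonneg hC₁.le hγ0.le)) hM.le
  set B1 : ℝ := 2 * Babs * C₁ * (C₁ * aγ) * M * Real.exp (-(c * aγ * (t/2))) with hB1def
  have hB1nn : 0 ≤ B1 := mul_nonneg hco1 (Real.exp_pos _).le
  have hW1 : (∫ y in Ioc (0:ℝ) (t/2), φ y) ≤ B1 * J := by
    have hpt : ∀ y ∈ Ioc (0:ℝ) (t/2), φ y ≤ B1 * Real.sqrt (1 + y^2) ^ (-(r-1)) := by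
      intro y hy
      obtain ⟨hy0, hy2⟩ := hy
      have hyt : y < t := by linarith
      calc φ y = ‖H (x-y) - H (x+y)‖ * |g y| := by
            simp only [hφdef]
            rw [norm_mul, Complex.norm_real, Real.norm_eq_abs]
        _ ≤ (2*Babs*C₁*(C₁*aγ)*y*Real.exp (-(c*aγ*(t-y)))) *
              (M * Real.sqrt (1+y^2)^(-r)) :=
            mul_le_mul (hnear y hy0 hyt) (hgbd y) (abs_nonneg _)
              (by positivity)
        _ = (2*Babs*C₁*(C₁*aγ)*M) *
              (Real.exp (-(c*aγ*(t-y))) * (y * Real.sqrt (1+y^2)^(-r))) := by ring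
        _ ≤ (2*Babs*C₁*(C₁*aγ)*M) *
              (Real.exp (-(c*aγ*(t/2))) * Real.sqrt (1+y^2)^(-(r-1))) := by
            apply mul_le_mul_of_nonneg_left _ hco1
            apply mul_le_mul _ (hbr1 y hy0) _ (Real.exp_pos _).le
            · apply Real.exp_le_exp.2
              have h5 : c * aγ * (t/2) ≤ c * aγ * (t - y) :=
                mul_le_mul_of_nonneg_left (by linarith) ha.le
              linarith
            · have := Real.rpow_nonneg (Real.sqrt_nonneg (1+y^2)) (-r)
              positivity
        _ = B1 * Real.sqrt (1+y^2)^(-(r-1)) := by rw [hB1def]; ring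
    calc (∫ y in Ioc (0:ℝ) (t/2), φ y)
        ≤ ∫ y in Ioc (0:ℝ) (t/2), B1 * Real.sqrt (1 + y^2) ^ (-(r-1)) :=
          setIntegral_mono_on hφint.integrableOn ((hJint.const_mul B1).integrableOn)
            measurableSet_Ioc hpt
      _ = B1 * ∫ y in Ioc (0:ℝ) (t/2), Real.sqrt (1 + y^2) ^ (-(r-1)) :=
          integral_const_mul _ _
      _ ≤ B1 * J := by
          apply mul_le_mul_of_nonneg_left _ hB1nn
          rw [hJdef]
          exact setIntegral_le_integral hJint (Filter.Eventually.of_forall fun y =>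
            Real.rpow_nonneg (Real.sqrt_nonneg _) _)
  -- piece 2
  have hco2 : (0:ℝ) ≤ 2 * (Babs * C₁) :=
    mul_nonneg (by norm_num) (mul_nonneg hB0 hC₁.le)
  set B2 : ℝ := 2 * Babs * C₁ * M * ((2:ℝ)^r * Real.sqrt (1 + x^2) ^ (-r)) with hB2def
  have hB2nn : 0 ≤ B2 := by
    apply mul_nonneg (mul_nonneg (mul_nonneg (mul_nonneg (by norm_num) hB0) hC₁.le) hM.le)
    positivity
  have hW2 : (∫ y in Ioi (t/2), φ y) ≤ B2 * (2 / (c * aγ)) := by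
    have hpt : ∀ y ∈ Ioi (t/2), φ y ≤ B2 * Real.exp (-(c * aγ * |y - t|)) := by
      intro y hy
      have hy' : t/2 < y := hy
      have hy0 : 0 ≤ y := by linarith
      have hxy : Real.sqrt (1 + x^2) / 2 ≤ Real.sqrt (1 + y^2) := by
        rw [div_le_iff₀ (by norm_num : (0:ℝ) < 2)]
        have hx2 : x^2 = t^2 := (sq_abs x).symm
        have h4 : 1 + x^2 ≤ 4 * (1 + y^2) := by nlinarith
        calc Real.sqrt (1 + x^2) ≤ Real.sqrt (4 * (1 + y^2)) := Real.sqrt_le_sqrt h4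
          _ = 2 * Real.sqrt (1 + y^2) := by
              rw [show (4:ℝ) * (1 + y^2) = (2*Real.sqrt (1+y^2))^2 by
                rw [mul_pow, Real.sq_sqrt (by positivity)]; ring]
              exact Real.sqrt_sq (by positivity)
          _ = Real.sqrt (1 + y^2) * 2 := mul_comm _ _
      have hw2 : Real.sqrt (1 + y^2) ^ (-r) ≤ (2:ℝ)^r * Real.sqrt (1 + x^2) ^ (-r) := by
        rw [← aux_half_rpow _ r (Real.sqrt_nonneg _)]
        exact Real.rpow_le_rpow_of_nonpos (by positivity) hxy (by linarith)
      calc φ y = ‖H (x-y) - H (x+y)‖ * |g y| := by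
            simp only [hφdef]
            rw [norm_mul, Complex.norm_real, Real.norm_eq_abs]
        _ ≤ (2 * (Babs * C₁) * Real.exp (-(c*aγ*|y - t|))) *
              (M * Real.sqrt (1+y^2)^(-r)) :=
            mul_le_mul (hfar y hy0) (hgbd y) (abs_nonneg _)
              (mul_nonneg hco2 (Real.exp_pos _).le)
        _ ≤ (2 * (Babs * C₁) * Real.exp (-(c*aγ*|y - t|))) *
              (M * ((2:ℝ)^r * Real.sqrt (1+x^2)^(-r))) := by
            apply mul_le_mul_of_nonneg_left (mul_le_mul_of_nonneg_left hw2 hM.le)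
              (mul_nonneg hco2 (Real.exp_pos _).le)
        _ = B2 * Real.exp (-(c*aγ*|y-t|)) := by rw [hB2def]; ring
    have hexpint := aux_exp_abs_integrable (c*aγ) t ha
    calc (∫ y in Ioi (t/2), φ y)
        ≤ ∫ y in Ioi (t/2), B2 * Real.exp (-(c * aγ * |y - t|)) :=
          setIntegral_mono_on hφint.integrableOn ((hexpint.const_mul B2).integrableOn)
            measurableSet_Ioi hpt
      _ = B2 * ∫ y in Ioi (t/2), Real.exp (-(c * aγ * |y - t|)) := integral_const_mul _ _
      _ ≤ B2 * ∫ y : ℝ, Real.exp (-(c * aγ * |y - t|)) := by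
          apply mul_le_mul_of_nonneg_left _ hB2nn
          exact setIntegral_le_integral hexpint
            (Filter.Eventually.of_forall fun y => (Real.exp_pos _).le)
      _ = B2 * (2 / (c * aγ)) := by rw [aux_exp_abs_integral (c*aγ) t ha]
  have hIbound : ‖∫ y : ℝ, H (x - y) * (g y:ℂ)‖ ≤ B1 * J + B2 * (2/(c*aγ)) := by
    rw [hIodd]
    refine habs.trans ?_
    rw [hsplit]
    exact add_le_add hW1 hW2
  -- final assembly
  set P : ℝ := Real.sqrt (1 + x^2) ^ r with hPdef
  have hP0 : 0 < P := Real.rpow_pos_of_pos (aux_br_pos x) r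
  have hterm2 : P * (B2 * (2/(c*aγ))) ≤ (4 * (2:ℝ)^r * Babs * C₁ / c) * M * aγ ^ (1 - r) := by
    have hPinv : Real.sqrt (1 + x^2) ^ (-r) = P⁻¹ := by
      rw [hPdef, Real.rpow_neg (Real.sqrt_nonneg _)]
    have heq : P * (B2 * (2/(c*aγ))) = ((4 * (2:ℝ)^r * Babs * C₁ / c) * M) * aγ⁻¹ := by
      rw [hB2def, hPinv]
      field_simp
      ring
    rw [heq]
    have hco : (0:ℝ) ≤ (4 * (2:ℝ)^r * Babs * C₁ / c) * M := by
      apply mul_nonneg _ hM.le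
      apply div_nonneg _ hc.le
      apply mul_nonneg (mul_nonneg (by positivity) hB0) hC₁.le
    have hainv : aγ⁻¹ ≤ aγ ^ (1 - r) := by
      rw [← Real.rpow_neg_one aγ]
      exact Real.rpow_le_rpow_of_exponent_ge hγ0 hγ1 (by linarith)
    calc ((4 * (2:ℝ)^r * Babs * C₁ / c) * M) * aγ⁻¹
        ≤ ((4 * (2:ℝ)^r * Babs * C₁ / c) * M) * aγ ^ (1 - r) :=
          mul_le_mul_of_nonneg_left hainv hco
      _ = (4 * (2:ℝ)^r * Babs * C₁ / c) * M * aγ ^ (1 - r) := by ring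
  have hco3 : (0:ℝ) ≤ 2 * Babs * C₁^2 * J * M :=
    mul_nonneg (mul_nonneg (mul_nonneg (mul_nonneg (by norm_num) hB0) (sq_nonneg C₁)) hJ0) hM.le
  have hterm1 : P * (B1 * J) ≤ (2 * Babs * C₁^2 * J * Q) * M * aγ ^ (1 - r) := by
    have hwe := aux_weight_exp r (by linarith) (c*aγ) x ha
    have hbase : (1 + 2/(c*aγ)) ^ r ≤ (1+2/c)^r * aγ ^ (-r) := by
      have h1 : 1 + 2/(c*aγ) ≤ (1 + 2/c) / aγ := by
        rw [le_div_iff₀ hγ0]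
        have e : (1 + 2/(c*aγ)) * aγ = aγ + 2/c := by field_simp
        rw [e]
        linarith
      calc (1 + 2/(c*aγ)) ^ r ≤ ((1 + 2/c)/aγ) ^ r :=
          Real.rpow_le_rpow (by positivity) h1 (by linarith)
        _ = (1+2/c)^r * aγ ^ (-r) := by
            rw [Real.div_rpow (by positivity) hγ0.le, Real.rpow_neg hγ0.le, div_eq_mul_inv]
    calc P * (B1 * J)
        = (2*Babs*C₁^2*J*M) * (aγ * (P * Real.exp (-(c*aγ*(t/2))))) := by
          rw [hB1def]; ring
      _ ≤ (2*Babs*C₁^2*J*M) *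
            (aγ * ((1 + 2/(c*aγ))^r * (2^n * (1 + (n.factorial : ℝ))))) := by
          apply mul_le_mul_of_nonneg_left _ hco3
          apply mul_le_mul_of_nonneg_left _ hγ0.le
          have ht2 : c*aγ*(t/2) = c*aγ*(|x|/2) := by rw [htdef]
          rw [hPdef, ht2]
          exact hwe
      _ ≤ (2*Babs*C₁^2*J*M) *
            (aγ * (((1+2/c)^r * aγ^(-r)) * (2^n * (1 + (n.factorial : ℝ))))) := by
          apply mul_le_mul_of_nonneg_left _ hco3
          apply mul_le_mul_of_nonneg_left _ hγ0.le
          apply mul_le_mul_of_nonneg_right hbase (by positivity)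
      _ = (2*Babs*C₁^2*J*Q) * M * (aγ * aγ^(-r)) := by
          rw [hQdef]; ring
      _ = (2*Babs*C₁^2*J*Q) * M * aγ^(1-r) := by
          have hpow : aγ * aγ^(-r) = aγ^(1-r) := by
            nth_rewrite 1 [← Real.rpow_one aγ]
            rw [← Real.rpow_add hγ0, show (1:ℝ) + -r = 1 - r by ring]
          rw [hpow]
  calc P * ‖∫ y : ℝ, H (x - y) * (g y:ℂ)‖
      ≤ P * (B1 * J + B2 * (2/(c*aγ))) := mul_le_mul_of_nonneg_left hIbound hP0.le
    _ = P * (B1 * J) + P * (B2 * (2/(c*aγ))) := by ring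
    _ ≤ (2 * Babs * C₁^2 * J * Q) * M * aγ ^ (1 - r)
          + (4 * (2:ℝ)^r * Babs * C₁ / c) * M * aγ ^ (1 - r) := add_le_add hterm1 hterm2
    _ ≤ C * M * aγ ^ (1 - r) := by
        rw [hCdef]
        have hMa : 0 ≤ M * aγ ^ (1-r) := mul_nonneg hM.le (Real.rpow_nonneg hγ0.le _)
        nlinarith [hMa]
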